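/- Let R be a commutative ring and D : R → R a derivation, i.e. an additive map satisfying D(xy) = x·D(y) + D(x)·y for all x, y ∈ R. For x ∈ R define the sequence g_n(x) ∈ R recursively by g_0(x) = 1 and g_{n+1}(x) = x·g_n(x) + D(g_n(x)). Then for all a, b ∈ R and all n ≥ 0, g_n(a + b) = Σ_{i=0}^{n} (n choose i) · g_i(a) · g_{n−i}(b). -/

import Mathlib

/-- Higher-order Leibniz rule: for a derivation `D` on a commutative ring and
the sequence `g_n(x)` defined by `g_0(x) = 1`, `g_{n+1}(x) = x·g_n(x) + D(g_n(x))`,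
one has `g_n(a+b) = ∑ᵢ (n choose i) g_i(a) g_{n-i}(b)`. -/
theorem stmt2 (R : Type*) [CommRing R] (D : R → R)
    (hDadd : ∀ x y, D (x + y) = D x + D y)
    (hDmul : ∀ x y, D (x * y) = x * D y + D x * y)
    (g : ℕ → R → R)
    (hg0 : ∀ x, g 0 x = 1)
    (hgs : ∀ n x, g (n + 1) x = x * g n x + D (g n x)) :
    ∀ (a b : R) (n : ℕ),
      g n (a + b) = ∑ i ∈ Finset.range (n + 1), (n.choose i : R) * g i a * g (n - i) b := by
  have hD0 : D 0 = 0 := by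
    have h := hDadd 0 0
    simp only [add_zero] at h
    exact (right_eq_add.mp h)
  have hD1 : D 1 = 0 := by
    have h := hDmul 1 1
    simp only [one_mul, mul_one] at h
    exact (right_eq_add.mp h)
  have hDnat : ∀ k : ℕ, D (k : R) = 0 := by
    intro k
    induction k with
    | zero => simpa using hD0
    | succ k ih =>
      push_cast
      rw [hDadd, ih, hD1, add_zero]
  have hDsum : ∀ (s : Finset ℕ) (f : ℕ → R),
      D (∑ i ∈ s, f i) = ∑ i ∈ s, D (f i) := by
    intro s f
    induction s using Finset.induction with
    | empty => simpa using hD0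
    | insert _ _ hx ih =>
      rw [Finset.sum_insert hx, Finset.sum_insert hx, hDadd, ih]
  intro a b n
  induction n with
  | zero => simp [hg0]
  | succ n ih =>
    rw [hgs, ih, hDsum]
    have key : ∀ i, D ((n.choose i : R) * g i a * g (n - i) b)
        = (n.choose i : R) * (D (g i a) * g (n - i) b + g i a * D (g (n - i) b)) := by
      intro i
      rw [mul_assoc, hDmul, hDmul, hDnat]
      ring
    simp only [key]
    have expand : (a + b) * ∑ i ∈ Finset.range (n + 1),
          (n.choose i : R) * g i a * g (n - i) b
        + ∑ i ∈ Finset.range (n + 1),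
          (n.choose i : R) * (D (g i a) * g (n - i) b + g i a * D (g (n - i) b))
        = (∑ i ∈ Finset.range (n + 1),
            (n.choose i : R) * (g (i + 1) a * g (n - i) b))
        + (∑ i ∈ Finset.range (n + 1),
            (n.choose i : R) * (g i a * g (n - i + 1) b)) := by
      rw [Finset.mul_sum, ← Finset.sum_add_distrib, ← Finset.sum_add_distrib]
      refine Finset.sum_congr rfl fun i _ => ?_
      rw [hgs, hgs]
      ring
    rw [expand]
    -- now handle the RHS
    have hRHS : ∑ i ∈ Finset.range (n + 2),
          ((n + 1).choose i : R) * g i a * g (n + 1 - i) b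
        = g 0 a * g (n + 1) b
        + ∑ i ∈ Finset.range (n + 1),
            ((n.choose i : R) + (n.choose (i + 1) : R)) * (g (i + 1) a * g (n - i) b) := by
      rw [Finset.sum_range_succ']
      have : ∀ i ∈ Finset.range (n + 1),
          ((n + 1).choose (i + 1) : R) * g (i + 1) a * g (n + 1 - (i + 1)) b
          = ((n.choose i : R) + (n.choose (i + 1) : R)) * (g (i + 1) a * g (n - i) b) := by
        intro i _
        have h1 : (n + 1).choose (i + 1) = n.choose i + n.choose (i + 1) := by
          rw [Nat.choose_succ_succ']
        have h2 : n + 1 - (i + 1) = n - i := by omega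
        rw [h1, h2]
        push_cast
        ring
      rw [Finset.sum_congr rfl this]
      simp [add_comm]
    rw [hRHS]
    have hsplit : ∑ i ∈ Finset.range (n + 1),
          ((n.choose i : R) + (n.choose (i + 1) : R)) * (g (i + 1) a * g (n - i) b)
        = (∑ i ∈ Finset.range (n + 1), (n.choose i : R) * (g (i + 1) a * g (n - i) b))
        + (∑ i ∈ Finset.range (n + 1), (n.choose (i + 1) : R) * (g (i + 1) a * g (n - i) b)) := by
      rw [← Finset.sum_add_distrib]
      exact Finset.sum_congr rfl fun i _ => by ring
    rw [hsplit]
    have hsecond : ∑ i ∈ Finset.range (n + 1),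
          (n.choose i : R) * (g i a * g (n - i + 1) b)
        = g 0 a * g (n + 1) b
        + ∑ i ∈ Finset.range (n + 1), (n.choose (i + 1) : R) * (g (i + 1) a * g (n - i) b) := by
      rw [Finset.sum_range_succ' (fun i => (n.choose i : R) * (g i a * g (n - i + 1) b))]
      have hlast : ∑ i ∈ Finset.range (n + 1),
            (n.choose (i + 1) : R) * (g (i + 1) a * g (n - i) b)
          = ∑ i ∈ Finset.range n,
            (n.choose (i + 1) : R) * (g (i + 1) a * g (n - i) b) := by
        rw [Finset.sum_range_succ]
        simp
      rw [hlast]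
      have : ∀ i ∈ Finset.range n,
          (n.choose (i + 1) : R) * (g (i + 1) a * g (n - (i + 1) + 1) b)
          = (n.choose (i + 1) : R) * (g (i + 1) a * g (n - i) b) := by
        intro i hi
        have : n - (i + 1) + 1 = n - i := by
          rw [Finset.mem_range] at hi; omega
        rw [this]
      rw [Finset.sum_congr rfl this]
      simp [add_comm]
    rw [hsecond]
    ring
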